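/- Dynamic fit of BanSaP with one-point feedback (Theorem 1, fit bound): Under the one-point BanSaP setting, for every constant β > 0 and every realization of the random sequence u_1, …, u_T, setting ‖λ̄‖ := max_{1 ≤ t ≤ T+1} ‖λ_t‖, the dynamic fit satisfies ‖[ Σ_{t=1}^T g_t(x_{1,t}) ]⁺‖ ≤ ‖λ̄‖/μ + G²√N·T/(2β) + δG√N·T + β√N·T·( α²d²F²/δ² + α²G²‖λ̄‖² ), where [·]⁺ denotes the entrywise positive part. -/

import Mathlib

open Metric Finset
open scoped Pointwise RealInnerProductSpace

/-- Entrywise positive part of a vector in `ℝ^N`. -/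
def posPart' {N : ℕ} (v : EuclideanSpace ℝ (Fin N)) : EuclideanSpace ℝ (Fin N) :=
  WithLp.toLp 2 (fun n => max (v n) 0)



section aux
variable {E : Type*} [NormedAddCommGroup E] [InnerProductSpace ℝ E]

/-- Variational inequality for a minimizer of distance over a convex set. -/
lemma proj_inner_le' {K : Set E} (hK : Convex ℝ K) {p q : E} (hq : q ∈ K)
    (hmin : ∀ z ∈ K, ‖q - p‖ ≤ ‖z - p‖) {w : E} (hw : w ∈ K) :
    ⟪p - q, w - q⟫ ≤ 0 := by
  by_contra hc
  push_neg at hc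
  set c : ℝ := ⟪p - q, w - q⟫ with hcdef
  set D : ℝ := ‖w - q‖ ^ 2 with hDdef
  have hD0 : 0 ≤ D := sq_nonneg _
  have key : ∀ s : ℝ, 0 < s → s ≤ 1 → 2 * c ≤ s * D := by
    intro s hs0 hs1
    have hz : (1 - s) • q + s • w ∈ K := hK hq hw (by linarith) hs0.le (by ring)
    have h1 := hmin _ hz
    have h2 : (1 - s) • q + s • w - p = (q - p) + s • (w - q) := by
      rw [smul_sub, sub_smul, one_smul]; abel
    have h3 : ‖q - p‖ ^ 2 ≤ ‖(q - p) + s • (w - q)‖ ^ 2 := by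
      rw [← h2]
      exact pow_le_pow_left₀ (norm_nonneg _) h1 2
    rw [norm_add_sq_real, real_inner_smul_right, norm_smul, mul_pow, Real.norm_eq_abs,
      sq_abs] at h3
    have h4 : ⟪q - p, w - q⟫ = -c := by
      rw [hcdef, ← inner_neg_left, neg_sub]
    rw [h4] at h3
    have hs2 : s ^ 2 * D ≤ s * D := by
      nlinarith [mul_nonneg (mul_nonneg hs0.le (by linarith : (0:ℝ) ≤ 1 - s)) hD0]
    nlinarith
  have h1 := key (min 1 (c / (D + 1))) (lt_min one_pos (div_pos hc (by linarith))) (min_le_left _ _)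
  have h2 : min 1 (c / (D + 1)) * D ≤ (c / (D + 1)) * D :=
    mul_le_mul_of_nonneg_right (min_le_right _ _) hD0
  have h3 : (c / (D + 1)) * D < c := by
    rw [div_mul_eq_mul_div, div_lt_iff₀ (by linarith)]
    nlinarith
  linarith

/-- Distance to a point of the set contracts under metric projection. -/
lemma proj_dist_le' {K : Set E} (hK : Convex ℝ K) {p q : E} (hq : q ∈ K)
    (hmin : ∀ z ∈ K, ‖q - p‖ ≤ ‖z - p‖) {w : E} (hw : w ∈ K) :
    ‖q - w‖ ≤ ‖p - w‖ := by
  have h := proj_inner_le' hK hq hmin hw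
  have h2 : ‖w - q‖ ^ 2 = ⟪p - q, w - q⟫ + ⟪w - p, w - q⟫ := by
    rw [← inner_add_left]
    have : p - q + (w - p) = w - q := by abel
    rw [this, real_inner_self_eq_norm_sq]
  have h3 : ‖w - q‖ ^ 2 ≤ ‖w - p‖ * ‖w - q‖ := by
    calc ‖w - q‖ ^ 2 = ⟪p - q, w - q⟫ + ⟪w - p, w - q⟫ := h2
      _ ≤ 0 + ‖w - p‖ * ‖w - q‖ := add_le_add h (real_inner_le_norm _ _)
      _ = ‖w - p‖ * ‖w - q‖ := by ring
  rw [← norm_sub_rev w q, ← norm_sub_rev w p]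
  rcases eq_or_lt_of_le (norm_nonneg (w - q)) with h0 | h0
  · rw [← h0]; exact norm_nonneg _
  · have h5 : ‖w - q‖ * ‖w - q‖ ≤ ‖w - p‖ * ‖w - q‖ := by nlinarith
    exact le_of_mul_le_mul_right h5 h0

end aux


/-- Monotonicity of the Euclidean norm on nonnegative vectors. -/
lemma euclid_norm_mono {N : ℕ} {v w : EuclideanSpace ℝ (Fin N)}
    (h0 : ∀ n, 0 ≤ v n) (h : ∀ n, v n ≤ w n) : ‖v‖ ≤ ‖w‖ := by
  rw [EuclideanSpace.norm_eq, EuclideanSpace.norm_eq]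
  apply Real.sqrt_le_sqrt
  apply Finset.sum_le_sum
  intro n _
  rw [Real.norm_eq_abs, Real.norm_eq_abs, sq_abs, sq_abs]
  nlinarith [h0 n, h n]

/-- Norm of a constant vector in `ℝ^N`. -/
lemma euclid_norm_const {N : ℕ} {c : ℝ} (hc : 0 ≤ c)
    {v : EuclideanSpace ℝ (Fin N)} (hv : ∀ n, v n = c) :
    ‖v‖ = Real.sqrt N * c := by
  rw [EuclideanSpace.norm_eq]
  simp only [hv]
  simp only [Real.norm_eq_abs, sq_abs, Finset.sum_const, Finset.card_univ, Fintype.card_fin,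
    nsmul_eq_mul]
  rw [Real.sqrt_mul (Nat.cast_nonneg N), Real.sqrt_sq hc]

/-- Telescoping sum over `Icc 1 T`. -/
lemma sum_Icc_telescope {T : ℕ} (f : ℕ → ℝ) :
    ∑ t ∈ Finset.Icc 1 T, (f (t + 1) - f t) = f (T + 1) - f 1 := by
  induction T with
  | zero => simp
  | succ T ih =>
      rcases Nat.eq_zero_or_pos T with rfl | hT
      · simp
      · rw [Finset.sum_Icc_succ_top (by omega), ih]; ring

/-- Bound on a nonneg combination of gradients via the Jacobian operator norm. -/
lemma grad_comb_bound {d N : ℕ} {G : ℝ}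
    (g : EuclideanSpace ℝ (Fin d) → EuclideanSpace ℝ (Fin N))
    (hdiff : ∀ n, Differentiable ℝ (fun x => g x n))
    (x : EuclideanSpace ℝ (Fin d)) (hjac : ‖fderiv ℝ g x‖ ≤ G)
    (lam : EuclideanSpace ℝ (Fin N)) :
    ‖∑ n, lam n • gradient (fun y => g y n) x‖ ≤ G * ‖lam‖ := by
  have hG0 : 0 ≤ G := le_trans (norm_nonneg _) hjac
  set s := ∑ n, lam n • gradient (fun y => g y n) x with hs
  have hgdiff : DifferentiableAt ℝ g x := differentiableAt_piLp 2 |>.mpr (fun n => (hdiff n) x)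
  set D := fderiv ℝ g x with hD
  have hcomp : ∀ n (h : EuclideanSpace ℝ (Fin d)),
      fderiv ℝ (fun y => g y n) x h = D h n := by
    intro n h
    have h1 : HasFDerivAt (fun y => g y n) ((PiLp.proj 2 _ n).comp D) x :=
      by have h2 := (PiLp.hasFDerivAt_apply (𝕜 := ℝ) 2 (g x) n).comp x hgdiff.hasFDerivAt; exact h2
    rw [h1.fderiv]
    rfl
  have hgrad : ∀ n (h : EuclideanSpace ℝ (Fin d)),
      ⟪gradient (fun y => g y n) x, h⟫ = D h n := by
    intro n h
    rw [gradient, InnerProductSpace.toDual_symm_apply, hcomp]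
  have hrhs : ⟪lam, D s⟫ = ∑ n, lam n * D s n := by
    rw [PiLp.inner_apply]
    simp only [RCLike.inner_apply, conj_trivial]
    exact Finset.sum_congr rfl fun n _ => mul_comm _ _
  have hss : ⟪s, s⟫ = ⟪lam, D s⟫ := by
    rw [hrhs]
    conv_lhs => rw [hs]
    rw [sum_inner]
    exact Finset.sum_congr rfl fun n _ => by rw [real_inner_smul_left, hgrad n s]
  have h1 : ‖s‖ ^ 2 ≤ ‖lam‖ * (G * ‖s‖) := by
    rw [← real_inner_self_eq_norm_sq, hss]
    calc ⟪lam, D s⟫ ≤ ‖lam‖ * ‖D s‖ := real_inner_le_norm _ _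
      _ ≤ ‖lam‖ * (G * ‖s‖) := by
          apply mul_le_mul_of_nonneg_left _ (norm_nonneg _)
          calc ‖D s‖ ≤ ‖D‖ * ‖s‖ := D.le_opNorm s
            _ ≤ G * ‖s‖ := mul_le_mul_of_nonneg_right hjac (norm_nonneg _)
  rcases eq_or_lt_of_le (norm_nonneg s) with h0 | h0
  · rw [← h0]; positivity
  · have h2 : ‖s‖ * ‖s‖ ≤ G * ‖lam‖ * ‖s‖ := by nlinarith
    exact le_of_mul_le_mul_right h2 h0

set_option maxHeartbeats 1000000 in
/-- Dynamic fit of BanSaP with one-point feedback (Theorem 1, fit bound):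
for any realization of the perturbations `u_1,…,u_T` and any `β > 0`, with
`λ̄ = max_{1 ≤ t ≤ T+1} ‖λ_t‖`, the dynamic fit satisfies
`‖[Σ_t g_t(x_{1,t})]⁺‖ ≤ λ̄/μ + G²√N T/(2β) + δG√N T + β√N T(α²d²F²/δ² + α²G²λ̄²)`. -/
theorem bansap_one_point_dynamic_fit
    (d N T : ℕ)
    (X : Set (EuclideanSpace ℝ (Fin d)))
    (hXconv : Convex ℝ X) (hXcomp : IsCompact X)
    (r R F G : ℝ) (hr : 0 < r) (hrR : r ≤ R)
    (hXball : closedBall (0 : EuclideanSpace ℝ (Fin d)) r ⊆ X)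
    (hXR : X ⊆ closedBall (0 : EuclideanSpace ℝ (Fin d)) R)
    (f : ℕ → EuclideanSpace ℝ (Fin d) → ℝ)
    (g : ℕ → EuclideanSpace ℝ (Fin d) → EuclideanSpace ℝ (Fin N))
    (hf_conv : ∀ t ∈ Icc 1 T, ConvexOn ℝ Set.univ (f t))
    (hf_diff : ∀ t ∈ Icc 1 T, Differentiable ℝ (f t))
    (hf_bdd : ∀ t ∈ Icc 1 T, ∀ x ∈ X, |f t x| ≤ F)
    (hf_grad : ∀ t ∈ Icc 1 T, ∀ x ∈ X, ‖gradient (f t) x‖ ≤ G)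
    (hg_conv : ∀ t ∈ Icc 1 T, ∀ n, ConvexOn ℝ Set.univ (fun x => g t x n))
    (hg_diff : ∀ t ∈ Icc 1 T, ∀ n, Differentiable ℝ (fun x => g t x n))
    (hg_grad : ∀ t ∈ Icc 1 T, ∀ n, ∀ x ∈ X, ‖gradient (fun y => g t y n) x‖ ≤ G)
    (hg_lip : ∀ t ∈ Icc 1 T, ∀ n, ∀ x y, |g t x n - g t y n| ≤ G * ‖x - y‖)
    (hg_jac : ∀ t ∈ Icc 1 T, ∀ x ∈ X, ‖fderiv ℝ (g t) x‖ ≤ G)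
    (hg_bdd : ∀ t ∈ Icc 1 T, ∀ x ∈ X, ‖g t x‖ ≤ G * R)
    (α μ δ γ : ℝ) (hα : 0 < α) (hμ : 0 < μ) (hδ : 0 < δ)
    (hγ : γ = δ / r) (hγ1 : γ < 1)
    (u : ℕ → EuclideanSpace ℝ (Fin d))
    (hu : ∀ t ∈ Icc 1 T, ‖u t‖ = 1)
    (xhat : ℕ → EuclideanSpace ℝ (Fin d))
    (lam : ℕ → EuclideanSpace ℝ (Fin N))
    (hx1 : xhat 1 ∈ (1 - γ) • X)
    (hlam1 : lam 1 = 0)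
    (hxrec : ∀ t ∈ Icc 1 T,
      xhat (t + 1) ∈ (1 - γ) • X ∧
      ∀ z ∈ (1 - γ) • X,
        ‖xhat (t + 1) - (xhat t - α • (((d : ℝ) / δ * f t (xhat t + δ • u t)) • u t
            + ∑ n, lam t n • gradient (fun y => g t y n) (xhat t)))‖ ≤
        ‖z - (xhat t - α • (((d : ℝ) / δ * f t (xhat t + δ • u t)) • u t
            + ∑ n, lam t n • gradient (fun y => g t y n) (xhat t)))‖)
    (hlamrec : ∀ t ∈ Icc 1 T, ∀ n,
      lam (t + 1) n = max (lam t n + μ * (g t (xhat t) n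
        + ⟪gradient (fun y => g t y n) (xhat t), xhat (t + 1) - xhat t⟫)) 0)
    (β : ℝ) (hβ : 0 < β)
    (lambar : ℝ)
    (hlambar : lambar =
      (Icc 1 (T + 1)).sup' (Finset.nonempty_Icc.mpr (by omega)) (fun t => ‖lam t‖)) :
    ‖posPart' (∑ t ∈ Icc 1 T, g t (xhat t + δ • u t))‖ ≤
      lambar / μ + G ^ 2 * Real.sqrt N * T / (2 * β) + δ * G * Real.sqrt N * T
        + β * Real.sqrt N * T *
            (α ^ 2 * (d : ℝ) ^ 2 * F ^ 2 / δ ^ 2 + α ^ 2 * G ^ 2 * lambar ^ 2) := by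
  clear hXcomp hrR hf_conv hg_conv hf_diff
  -- trivial case T = 0
  rcases Nat.eq_zero_or_pos T with rfl | hT1
  · have hpp : posPart' (∑ t ∈ Finset.Icc 1 0, g t (xhat t + δ • u t)) = 0 := by
      have h1 : (Finset.Icc 1 0 : Finset ℕ) = ∅ := by simp
      rw [h1, Finset.sum_empty]
      ext n
      simp [posPart']
    have hlb : lambar = 0 := by
      rw [hlambar]
      simp [hlam1]
    rw [hpp, hlb, norm_zero]
    push_cast
    simp
  -- main case
  have h0X : (0 : EuclideanSpace ℝ (Fin d)) ∈ X := hXball (mem_closedBall_self hr.le)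
  have hγ0 : 0 < γ := by rw [hγ]; positivity
  have hδγr : δ = γ * r := by rw [hγ]; field_simp
  have h1T : (1 : ℕ) ∈ Finset.Icc 1 T := Finset.mem_Icc.mpr ⟨le_refl _, hT1⟩
  have hG0 : 0 ≤ G := le_trans (norm_nonneg _) (hf_grad 1 h1T 0 h0X)
  have hF0 : 0 ≤ F := le_trans (abs_nonneg _) (hf_bdd 1 h1T 0 h0X)
  have hK : Convex ℝ ((1 - γ) • X) := hXconv.smul _
  have hmem1 : ∀ t ∈ Finset.Icc 1 T, t ∈ Finset.Icc 1 (T + 1) := by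
    intro t ht
    rw [Finset.mem_Icc] at *
    omega
  have hxhatK : ∀ t ∈ Finset.Icc 1 (T + 1), xhat t ∈ (1 - γ) • X := by
    intro t ht
    rw [Finset.mem_Icc] at ht
    rcases eq_or_ne t 1 with rfl | h1
    · exact hx1
    · obtain ⟨s, rfl⟩ : ∃ s, t = s + 1 := ⟨t - 1, by omega⟩
      exact (hxrec s (Finset.mem_Icc.mpr ⟨by omega, by omega⟩)).1
  have hsubX : ∀ y ∈ (1 - γ) • X, y ∈ X := by
    intro y hy
    obtain ⟨x, hx, rfl⟩ := hy
    have h : (1 - γ) • x + γ • (0 : EuclideanSpace ℝ (Fin d)) ∈ X :=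
      hXconv hx h0X (by linarith) hγ0.le (by ring)
    simpa using h
  have hxhatX : ∀ t ∈ Finset.Icc 1 (T + 1), xhat t ∈ X := fun t ht => hsubX _ (hxhatK t ht)
  have hpertX : ∀ t ∈ Finset.Icc 1 T, xhat t + δ • u t ∈ X := by
    intro t ht
    obtain ⟨x, hx, hxe⟩ := hxhatK t (hmem1 t ht)
    have hru : r • u t ∈ X := by
      apply hXball
      rw [mem_closedBall_zero_iff, norm_smul, hu t ht, Real.norm_eq_abs, abs_of_pos hr, mul_one]
    have h : (1 - γ) • x + γ • (r • u t) ∈ X := hXconv hx hru (by linarith) hγ0.le (by ring)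
    have he : (1 - γ) • x + γ • (r • u t) = xhat t + δ • u t := by
      rw [smul_smul, ← hδγr, show (1 - γ) • x = xhat t from hxe]
    rwa [he] at h
  have hlamnn : ∀ t ∈ Finset.Icc 1 (T + 1), ∀ n, 0 ≤ lam t n := by
    intro t ht n
    rw [Finset.mem_Icc] at ht
    rcases eq_or_ne t 1 with rfl | h1
    · simp [hlam1]
    · obtain ⟨s, rfl⟩ : ∃ s, t = s + 1 := ⟨t - 1, by omega⟩
      rw [hlamrec s (Finset.mem_Icc.mpr ⟨by omega, by omega⟩) n]
      exact le_max_right _ _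
  have hlamle : ∀ t ∈ Finset.Icc 1 (T + 1), ‖lam t‖ ≤ lambar := by
    intro t ht
    rw [hlambar]
    exact Finset.le_sup' (fun t => ‖lam t‖) ht
  have hlambar0 : 0 ≤ lambar :=
    le_trans (norm_nonneg _) (hlamle (T + 1) (Finset.mem_Icc.mpr ⟨by omega, le_refl _⟩))
  set M : ℝ := (d : ℝ) * F / δ + G * lambar with hM
  have hM0 : 0 ≤ M := by positivity
  -- step size bound
  have hDelta : ∀ t ∈ Finset.Icc 1 T, ‖xhat (t + 1) - xhat t‖ ≤ α * M := by
    intro t ht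
    set v := ((d : ℝ) / δ * f t (xhat t + δ • u t)) • u t
      + ∑ n, lam t n • gradient (fun y => g t y n) (xhat t) with hv
    have h₁ : ‖((d : ℝ) / δ * f t (xhat t + δ • u t)) • u t‖ ≤ (d : ℝ) * F / δ := by
      rw [norm_smul, hu t ht, mul_one, Real.norm_eq_abs, abs_mul, abs_div,
        abs_of_nonneg (Nat.cast_nonneg d), abs_of_pos hδ, div_mul_eq_mul_div]
      have hf := hf_bdd t ht _ (hpertX t ht)
      gcongr
    have h₂ : ‖∑ n, lam t n • gradient (fun y => g t y n) (xhat t)‖ ≤ G * lambar := by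
      calc ‖∑ n, lam t n • gradient (fun y => g t y n) (xhat t)‖
          ≤ G * ‖lam t‖ := grad_comb_bound (g t) (hg_diff t ht) (xhat t)
            (hg_jac t ht _ (hxhatX t (hmem1 t ht))) (lam t)
        _ ≤ G * lambar := mul_le_mul_of_nonneg_left (hlamle t (hmem1 t ht)) hG0
    have hvbound : ‖v‖ ≤ M := by
      rw [hv, hM]
      calc ‖((d : ℝ) / δ * f t (xhat t + δ • u t)) • u t
            + ∑ n, lam t n • gradient (fun y => g t y n) (xhat t)‖
          ≤ ‖((d : ℝ) / δ * f t (xhat t + δ • u t)) • u t‖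
            + ‖∑ n, lam t n • gradient (fun y => g t y n) (xhat t)‖ := norm_add_le _ _
        _ ≤ (d : ℝ) * F / δ + G * lambar := add_le_add h₁ h₂
    have hrec := hxrec t ht
    have hle := proj_dist_le' hK hrec.1 (fun z hz => hrec.2 z hz) (hxhatK t (hmem1 t ht))
    calc ‖xhat (t + 1) - xhat t‖ ≤ ‖xhat t - α • v - xhat t‖ := hle
      _ = α * ‖v‖ := by
          rw [show xhat t - α • v - xhat t = -(α • v) by abel, norm_neg, norm_smul,
            Real.norm_eq_abs, abs_of_pos hα]
      _ ≤ α * M := mul_le_mul_of_nonneg_left hvbound hα.le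
  set A : ℝ := G ^ 2 / (2 * β) + β * (α ^ 2 * (d : ℝ) ^ 2 * F ^ 2 / δ ^ 2
      + α ^ 2 * G ^ 2 * lambar ^ 2) with hA
  have hA0 : 0 ≤ A := by positivity
  have hstep : ∀ t ∈ Finset.Icc 1 T, G * ‖xhat (t + 1) - xhat t‖ ≤ A := by
    intro t ht
    set b := ‖xhat (t + 1) - xhat t‖ with hb
    have hb0 : 0 ≤ b := norm_nonneg _
    have hbM := hDelta t ht
    have h1 : G * b ≤ G ^ 2 / (2 * β) + β / 2 * b ^ 2 := by
      rw [← sub_nonneg]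
      have he : G ^ 2 / (2 * β) + β / 2 * b ^ 2 - G * b = (G - β * b) ^ 2 / (2 * β) := by
        field_simp
        ring
      rw [he]
      positivity
    have h2 : β / 2 * b ^ 2 ≤ β * (α ^ 2 * (d : ℝ) ^ 2 * F ^ 2 / δ ^ 2
        + α ^ 2 * G ^ 2 * lambar ^ 2) := by
      have hb2 : b ^ 2 ≤ α ^ 2 * M ^ 2 := by
        have h5 := mul_self_le_mul_self hb0 hbM
        calc b ^ 2 = b * b := sq b
          _ ≤ (α * M) * (α * M) := h5
          _ = α ^ 2 * M ^ 2 := by ring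
      have hM2 : M ^ 2 ≤ 2 * ((d : ℝ) ^ 2 * F ^ 2 / δ ^ 2 + G ^ 2 * lambar ^ 2) := by
        have hdf : (d : ℝ) ^ 2 * F ^ 2 / δ ^ 2 = ((d : ℝ) * F / δ) ^ 2 := by ring
        have hdg : G ^ 2 * lambar ^ 2 = (G * lambar) ^ 2 := by ring
        rw [hM, hdf, hdg]
        nlinarith [sq_nonneg ((d : ℝ) * F / δ - G * lambar)]
      have h3 : b ^ 2 ≤ 2 * α ^ 2 * ((d : ℝ) ^ 2 * F ^ 2 / δ ^ 2 + G ^ 2 * lambar ^ 2) := by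
        have h4 := mul_le_mul_of_nonneg_left hM2 (sq_nonneg α)
        calc b ^ 2 ≤ α ^ 2 * M ^ 2 := hb2
          _ ≤ α ^ 2 * (2 * ((d : ℝ) ^ 2 * F ^ 2 / δ ^ 2 + G ^ 2 * lambar ^ 2)) := h4
          _ = 2 * α ^ 2 * ((d : ℝ) ^ 2 * F ^ 2 / δ ^ 2 + G ^ 2 * lambar ^ 2) := by ring
      calc β / 2 * b ^ 2
          ≤ β / 2 * (2 * α ^ 2 * ((d : ℝ) ^ 2 * F ^ 2 / δ ^ 2 + G ^ 2 * lambar ^ 2)) :=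
            mul_le_mul_of_nonneg_left h3 (by positivity)
        _ = β * (α ^ 2 * (d : ℝ) ^ 2 * F ^ 2 / δ ^ 2 + α ^ 2 * G ^ 2 * lambar ^ 2) := by ring
    calc G * b ≤ G ^ 2 / (2 * β) + β / 2 * b ^ 2 := h1
      _ ≤ G ^ 2 / (2 * β) + β * (α ^ 2 * (d : ℝ) ^ 2 * F ^ 2 / δ ^ 2
          + α ^ 2 * G ^ 2 * lambar ^ 2) := by linarith [h2]
      _ = A := hA.symm
  -- per-coordinate bound
  have hcoord : ∀ n, ∑ t ∈ Finset.Icc 1 T, g t (xhat t + δ • u t) n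
      ≤ lam (T + 1) n / μ + (T : ℝ) * (A + G * δ) := by
    intro n
    have htel : ∑ t ∈ Finset.Icc 1 T, (lam (t + 1) n - lam t n) = lam (T + 1) n - lam 1 n :=
      sum_Icc_telescope (fun t => lam t n)
    have hμsum : μ * ∑ t ∈ Finset.Icc 1 T, (g t (xhat t) n
        + ⟪gradient (fun y => g t y n) (xhat t), xhat (t + 1) - xhat t⟫) ≤ lam (T + 1) n := by
      rw [Finset.mul_sum]
      calc ∑ t ∈ Finset.Icc 1 T, μ * (g t (xhat t) n
            + ⟪gradient (fun y => g t y n) (xhat t), xhat (t + 1) - xhat t⟫)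
          ≤ ∑ t ∈ Finset.Icc 1 T, (lam (t + 1) n - lam t n) := by
            apply Finset.sum_le_sum
            intro t ht
            have h2 : lam t n + μ * (g t (xhat t) n
                + ⟪gradient (fun y => g t y n) (xhat t), xhat (t + 1) - xhat t⟫)
                ≤ lam (t + 1) n := by
              rw [hlamrec t ht n]
              exact le_max_left _ _
            linarith
        _ = lam (T + 1) n - lam 1 n := htel
        _ ≤ lam (T + 1) n := by
            rw [hlam1]
            simp
    have hsum1 : ∑ t ∈ Finset.Icc 1 T, (g t (xhat t) n
        + ⟪gradient (fun y => g t y n) (xhat t), xhat (t + 1) - xhat t⟫)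
        ≤ lam (T + 1) n / μ := by
      rw [le_div_iff₀ hμ]
      linarith [hμsum]
    have hterm : ∀ t ∈ Finset.Icc 1 T, g t (xhat t + δ • u t) n
        ≤ (g t (xhat t) n + ⟪gradient (fun y => g t y n) (xhat t), xhat (t + 1) - xhat t⟫)
          + (A + G * δ) := by
      intro t ht
      have hΔ : -⟪gradient (fun y => g t y n) (xhat t), xhat (t + 1) - xhat t⟫
          ≤ G * ‖xhat (t + 1) - xhat t‖ := by
        calc -⟪gradient (fun y => g t y n) (xhat t), xhat (t + 1) - xhat t⟫
            ≤ |⟪gradient (fun y => g t y n) (xhat t), xhat (t + 1) - xhat t⟫| := neg_le_abs _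
          _ ≤ ‖gradient (fun y => g t y n) (xhat t)‖ * ‖xhat (t + 1) - xhat t‖ :=
              abs_real_inner_le_norm _ _
          _ ≤ G * ‖xhat (t + 1) - xhat t‖ :=
              mul_le_mul_of_nonneg_right (hg_grad t ht n _ (hxhatX t (hmem1 t ht)))
                (norm_nonneg _)
      have hlip : g t (xhat t + δ • u t) n - g t (xhat t) n ≤ G * δ := by
        have h := hg_lip t ht n (xhat t + δ • u t) (xhat t)
        have he : xhat t + δ • u t - xhat t = δ • u t := by abel
        rw [he, norm_smul, hu t ht, Real.norm_eq_abs, abs_of_pos hδ, mul_one] at h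
        linarith [le_abs_self (g t (xhat t + δ • u t) n - g t (xhat t) n)]
      linarith [hstep t ht]
    calc ∑ t ∈ Finset.Icc 1 T, g t (xhat t + δ • u t) n
        ≤ ∑ t ∈ Finset.Icc 1 T, ((g t (xhat t) n
            + ⟪gradient (fun y => g t y n) (xhat t), xhat (t + 1) - xhat t⟫)
            + (A + G * δ)) := Finset.sum_le_sum hterm
      _ = (∑ t ∈ Finset.Icc 1 T, (g t (xhat t) n
            + ⟪gradient (fun y => g t y n) (xhat t), xhat (t + 1) - xhat t⟫))
            + (T : ℝ) * (A + G * δ) := by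
          rw [Finset.sum_add_distrib, Finset.sum_const, Nat.card_Icc]
          simp only [Nat.add_sub_cancel, nsmul_eq_mul]
      _ ≤ lam (T + 1) n / μ + (T : ℝ) * (A + G * δ) := by linarith [hsum1]
  -- assemble
  set c : ℝ := (T : ℝ) * (A + G * δ) with hc
  have hc0 : 0 ≤ c := by positivity
  set S := ∑ t ∈ Finset.Icc 1 T, g t (xhat t + δ • u t) with hS
  have hSapp : ∀ n, S n = ∑ t ∈ Finset.Icc 1 T, g t (xhat t + δ • u t) n := by
    intro n
    rw [hS]
    rw [WithLp.ofLp_sum, Finset.sum_apply]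
  set cvec : EuclideanSpace ℝ (Fin N) := (WithLp.equiv 2 (Fin N → ℝ)).symm (fun _ => c)
    with hcvecdef
  have hcvec : ∀ n, cvec n = c := fun n => rfl
  set w : EuclideanSpace ℝ (Fin N) := μ⁻¹ • lam (T + 1) + cvec with hwdef
  have hw : ∀ n, w n = lam (T + 1) n / μ + c := by
    intro n
    rw [hwdef]
    rw [PiLp.add_apply, PiLp.smul_apply, hcvec n, smul_eq_mul]
    ring
  have hwnn : ∀ n, 0 ≤ w n := by
    intro n
    rw [hw n]
    have := hlamnn (T + 1) (Finset.mem_Icc.mpr ⟨by omega, le_refl _⟩) n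
    positivity
  have hmono : ‖posPart' S‖ ≤ ‖w‖ := by
    apply euclid_norm_mono
    · intro n
      exact le_max_right (S n) 0
    · intro n
      apply max_le (a := S n) _ (hwnn n)
      have h := hcoord n
      rw [← hSapp n] at h
      rw [hw n]
      exact h
  have hwle : ‖w‖ ≤ lambar / μ + Real.sqrt N * c := by
    rw [hwdef]
    calc ‖μ⁻¹ • lam (T + 1) + cvec‖ ≤ ‖μ⁻¹ • lam (T + 1)‖ + ‖cvec‖ := norm_add_le _ _
      _ ≤ lambar / μ + Real.sqrt N * c := by
          apply add_le_add
          · rw [norm_smul, Real.norm_eq_abs, abs_of_pos (inv_pos.mpr hμ), div_eq_inv_mul]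
            exact mul_le_mul_of_nonneg_left
              (hlamle (T + 1) (Finset.mem_Icc.mpr ⟨by omega, le_refl _⟩))
              (inv_pos.mpr hμ).le
          · exact le_of_eq (euclid_norm_const hc0 hcvec)
  calc ‖posPart' S‖ ≤ ‖w‖ := hmono
    _ ≤ lambar / μ + Real.sqrt N * c := hwle
    _ = lambar / μ + G ^ 2 * Real.sqrt N * T / (2 * β) + δ * G * Real.sqrt N * T
        + β * Real.sqrt N * T * (α ^ 2 * (d : ℝ) ^ 2 * F ^ 2 / δ ^ 2
          + α ^ 2 * G ^ 2 * lambar ^ 2) := by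
        rw [hc, hA]
        ring
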